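/- Let i < n with b_i ≤ b_{i+1}, and let v ∈ [0,1]^n with v_i + v_{i+1} ≤ 1. Let v' be obtained from v by replacing (v_i, v_{i+1}) with (v_i + v_{i+1}, 0). Then v' ∈ [0,1]^n and F(v') − F(v) = (b_i − b_{i+1}) v_{i+1} ≤ 0. -/

import Mathlib

open Finset

/-- (Case `v_i + v_{i+1} ≤ 1`.) Replacing `(v_i, v_{i+1})` by
`(v_i + v_{i+1}, 0)` keeps `v'` in `[0,1]^n` and
`F(v') − F(v) = (b_i − b_{i+1}) v_{i+1} ≤ 0`, where
`F(v) = ∑ v_k b_k + (1/n)(∑ v_k − nQ)²`. -/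
theorem stmt10
    (n : ℕ) (b : Fin n → ℝ) (Q : ℝ)
    (F : (Fin n → ℝ) → ℝ)
    (hF : ∀ v, F v = ∑ k : Fin n, v k * b k
      + (1 / (n : ℝ)) * (∑ k : Fin n, v k - (n : ℝ) * Q) ^ 2)
    (i : ℕ) (hi : i + 1 < n)
    (hb : b ⟨i, Nat.lt_of_succ_lt hi⟩ ≤ b ⟨i + 1, hi⟩)
    (v : Fin n → ℝ) (hv : v ∈ Set.Icc (0 : Fin n → ℝ) 1)
    (hsum : v ⟨i, Nat.lt_of_succ_lt hi⟩ + v ⟨i + 1, hi⟩ ≤ 1)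
    (v' : Fin n → ℝ)
    (hv' : v' = Function.update
      (Function.update v ⟨i, Nat.lt_of_succ_lt hi⟩
        (v ⟨i, Nat.lt_of_succ_lt hi⟩ + v ⟨i + 1, hi⟩))
      ⟨i + 1, hi⟩ 0) :
    v' ∈ Set.Icc (0 : Fin n → ℝ) 1 ∧
      F v' - F v = (b ⟨i, Nat.lt_of_succ_lt hi⟩ - b ⟨i + 1, hi⟩) * v ⟨i + 1, hi⟩ ∧
      F v' - F v ≤ 0 := by
  set i0 : Fin n := ⟨i, Nat.lt_of_succ_lt hi⟩ with hi0
  set i1 : Fin n := ⟨i + 1, hi⟩ with hi1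
  have hne : i0 ≠ i1 := by
    simp [hi0, hi1, Fin.ext_iff]
  obtain ⟨hv0, hv1⟩ := hv
  have h0 : ∀ k, 0 ≤ v k := fun k => hv0 k
  have h1 : ∀ k, v k ≤ 1 := fun k => hv1 k
  have hv'i0 : v' i0 = v i0 + v i1 := by
    rw [hv', Function.update_of_ne hne, Function.update_self]
  have hv'i1 : v' i1 = 0 := by
    rw [hv', Function.update_self]
  have hdiff : ∀ k, k ≠ i0 → k ≠ i1 → v' k = v k := by
    intro k hk0 hk1
    rw [hv', Function.update_of_ne hk1, Function.update_of_ne hk0]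
  have key : ∀ (c : Fin n → ℝ), (∀ k, k ≠ i0 → k ≠ i1 → c k = 0) →
      ∑ k : Fin n, c k = c i0 + c i1 := by
    intro c hc
    rw [← Finset.sum_subset (Finset.subset_univ ({i0, i1} : Finset (Fin n)))]
    · rw [Finset.sum_pair hne]
    · intro k _ hk
      simp only [Finset.mem_insert, Finset.mem_singleton, not_or] at hk
      exact hc k hk.1 hk.2
  have hsub : ∀ (f g : Fin n → ℝ),
      ∑ k : Fin n, (f k - g k) = ∑ k : Fin n, f k - ∑ k : Fin n, g k :=
    fun f g => Finset.sum_sub_distrib f g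
  have hsum_eq : ∑ k : Fin n, v' k = ∑ k : Fin n, v k := by
    have := key (fun k => v' k - v k) (by intro k hk0 hk1; simp [hdiff k hk0 hk1])
    rw [hsub] at this
    simp only [hv'i0, hv'i1] at this
    linarith
  have hlin : ∑ k : Fin n, v' k * b k
      = ∑ k : Fin n, v k * b k + v i1 * b i0 - v i1 * b i1 := by
    have := key (fun k => v' k * b k - v k * b k)
      (by intro k hk0 hk1; simp [hdiff k hk0 hk1])
    rw [hsub] at this
    simp only [hv'i0, hv'i1] at this
    linarith [this]
  have hFeq : F v' - F v = (b i0 - b i1) * v i1 := by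
    rw [hF, hF, hsum_eq, hlin]
    ring
  refine ⟨⟨fun k => ?_, fun k => ?_⟩, hFeq, ?_⟩
  · by_cases hk1 : k = i1
    · simp [hk1, hv'i1]
    · by_cases hk0 : k = i0
      · subst hk0; rw [hv'i0]; exact add_nonneg (h0 i0) (h0 i1)
      · rw [hdiff k hk0 hk1]; exact h0 k
  · by_cases hk1 : k = i1
    · simp [hk1, hv'i1]
    · by_cases hk0 : k = i0
      · subst hk0; rw [hv'i0]; exact hsum
      · rw [hdiff k hk0 hk1]; exact h1 k
  · rw [hFeq]
    exact mul_nonpos_of_nonpos_of_nonneg (sub_nonpos.mpr hb) (h0 i1)
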